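/- There exist ρ ∈ (0, 1/2) and r₀ > 0 such that for all 0 < r ≤ r₀, ρπ/r ≤ ∫_0^r J(r,x) dx ≤ (1−ρ)π/r. -/

import Mathlib

open Real

/-- The annulus function `J(r,x) = (π²/(2r²)) ∑_{k ∈ ℤ} cosh(π(x+2kπ)/(2r))⁻²`. -/
noncomputable def Jfun (r x : ℝ) : ℝ :=
  (π ^ 2 / (2 * r ^ 2)) * ∑' k : ℤ, ((Real.cosh (π * (x + 2 * (k : ℝ) * π) / (2 * r))) ^ 2)⁻¹

namespace StmtAux

lemma sech_sq_le_exp (t : ℝ) : ((Real.cosh t) ^ 2)⁻¹ ≤ 4 * Real.exp (-(2 * |t|)) := by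
  have h1 : Real.exp |t| / 2 ≤ Real.cosh t := by
    rw [← Real.cosh_abs, Real.cosh_eq]
    have := (Real.exp_pos (-|t|)).le
    linarith
  have hc := Real.cosh_pos t
  have h2 : Real.exp |t| ^ 2 / 4 ≤ Real.cosh t ^ 2 := by nlinarith [(Real.exp_pos |t|).le]
  have h3 : (0:ℝ) < Real.exp |t| ^ 2 / 4 := by positivity
  have h4 : ((Real.cosh t) ^ 2)⁻¹ ≤ (Real.exp |t| ^ 2 / 4)⁻¹ := by
    apply inv_anti₀ h3 h2
  refine h4.trans (le_of_eq ?_)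
  have h5 : Real.exp (-(2 * |t|)) = (Real.exp |t| ^ 2)⁻¹ := by
    rw [Real.exp_neg, two_mul, Real.exp_add]; ring_nf
  rw [h5]
  have := (Real.exp_pos |t|).ne'
  field_simp

lemma sech_sq_le_one (t : ℝ) : ((Real.cosh t) ^ 2)⁻¹ ≤ 1 := by
  have h := Real.one_le_cosh t
  have : (1:ℝ) ≤ Real.cosh t ^ 2 := by nlinarith
  exact inv_le_one_of_one_le₀ this

lemma integral_sech_sq {a b : ℝ} (ha : 0 < a) :
    ∫ x in (0:ℝ)..b, ((Real.cosh (a * x)) ^ 2)⁻¹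
      = Real.sinh (a * b) / Real.cosh (a * b) / a := by
  have hF : ∀ x : ℝ, HasDerivAt (fun y => Real.sinh (a * y) / Real.cosh (a * y) / a)
      (((Real.cosh (a * x)) ^ 2)⁻¹) x := by
    intro x
    have h1 : HasDerivAt (fun y : ℝ => a * y) a x := by
      simpa using (hasDerivAt_id x).const_mul a
    have hs : HasDerivAt (fun y => Real.sinh (a * y)) (Real.cosh (a * x) * a) x :=
      (Real.hasDerivAt_sinh (a * x)).comp x h1
    have hc : HasDerivAt (fun y => Real.cosh (a * y)) (Real.sinh (a * x) * a) x :=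
      (Real.hasDerivAt_cosh (a * x)).comp x h1
    have hcpos := Real.cosh_pos (a * x)
    have hd := (hs.div hc hcpos.ne').div_const a
    refine HasDerivAt.congr_deriv hd ?_
    have hid := Real.cosh_sq_sub_sinh_sq (a * x)
    field_simp
    nlinarith [hid]
  have hcont : Continuous fun x : ℝ => ((Real.cosh (a * x)) ^ 2)⁻¹ := by
    apply Continuous.inv₀
    · exact (Real.continuous_cosh.comp (continuous_const.mul continuous_id)).pow 2
    · intro x; exact (pow_pos (Real.cosh_pos _) 2).ne'
  rw [intervalIntegral.integral_eq_sub_of_hasDerivAt (fun x _ => hF x)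
    (hcont.intervalIntegrable 0 b)]
  simp

lemma exp_pi_le : Real.exp π ≤ 55 := by
  have h1 : Real.exp π ≤ Real.exp 4 := Real.exp_le_exp.mpr Real.pi_le_four
  have h2 : Real.exp (4:ℝ) = Real.exp 1 ^ 4 := by
    rw [← Real.exp_nat_mul]; norm_num
  have h3 : Real.exp 1 ^ 4 ≤ (2.7182818286:ℝ) ^ 4 :=
    pow_le_pow_left₀ (Real.exp_pos 1).le Real.exp_one_lt_d9.le 4
  nlinarith

lemma T_bounds : 1/100 ≤ Real.sinh (π/2) / Real.cosh (π/2) ∧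
    Real.sinh (π/2) / Real.cosh (π/2) ≤ 27/28 := by
  set E := Real.exp (π/2) with hE
  have hEpos : 0 < E := Real.exp_pos _
  have hE2 : E ^ 2 ≤ 55 := by
    have : E ^ 2 = Real.exp π := by
      rw [hE, ← Real.exp_nat_mul]; ring_nf
    rw [this]; exact exp_pi_le
  have hEge : 2 ≤ E := by
    have h1 : (1:ℝ) ≤ π/2 := by nlinarith [Real.pi_gt_three]
    have := Real.exp_le_exp.mpr h1
    have h2 := Real.exp_one_gt_d9
    rw [← hE] at this
    linarith
  have hsinh : Real.sinh (π/2) = (E - E⁻¹) / 2 := by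
    rw [Real.sinh_eq, Real.exp_neg, hE]
  have hcosh : Real.cosh (π/2) = (E + E⁻¹) / 2 := by
    rw [Real.cosh_eq, Real.exp_neg, hE]
  have hEi : E * E⁻¹ = 1 := mul_inv_cancel₀ hEpos.ne'
  have hEipos : 0 < E⁻¹ := inv_pos.mpr hEpos
  have hdpos : 0 < (E + E⁻¹) / 2 := by positivity
  rw [hsinh, hcosh]
  constructor
  · rw [le_div_iff₀ hdpos]
    nlinarith
  · rw [div_le_iff₀ hdpos]
    nlinarith

lemma exp15_ge : (1600:ℝ) ≤ Real.exp 15 := by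
  have h2 : Real.exp (15:ℝ) = Real.exp 2.5 ^ 6 := by
    rw [← Real.exp_nat_mul]; norm_num
  have h3 : (3.5:ℝ) ≤ Real.exp 2.5 := by
    have := Real.add_one_le_exp (2.5:ℝ)
    linarith
  have h4 : (3.5:ℝ) ^ 6 ≤ Real.exp 2.5 ^ 6 :=
    pow_le_pow_left₀ (by norm_num) h3 6
  nlinarith

lemma summable_q_natAbs {q : ℝ} (h0 : 0 ≤ q) (h1 : q < 1) :
    Summable (fun k : ℤ => q ^ k.natAbs) := by
  apply Summable.of_nat_of_neg_add_one
  · simpa using summable_geometric_of_lt_one h0 h1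
  · have h2 : Summable (fun n : ℕ => q ^ n * q) :=
      (summable_geometric_of_lt_one h0 h1).mul_right q
    have h3 : ∀ n : ℕ, (-((n:ℤ) + 1)).natAbs = n + 1 := by
      intro n
      rw [Int.natAbs_neg]
      exact_mod_cast Int.natAbs_natCast (n+1)
    simp only [h3]
    simpa [pow_succ] using h2

lemma tsum_q_int {q : ℝ} (h0 : 0 ≤ q) (h1 : q < 1) :
    ∑' k : ℤ, q ^ k.natAbs = (1 - q)⁻¹ * (1 + q) := by
  have hgeo := summable_geometric_of_lt_one h0 h1
  have hnat : ∀ n : ℕ, ((n:ℤ)).natAbs = n := fun n => Int.natAbs_natCast n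
  have hneg : ∀ n : ℕ, ((-((n:ℤ)+1))).natAbs = n + 1 := by
    intro n; rw [Int.natAbs_neg]; exact_mod_cast Int.natAbs_natCast (n+1)
  have h2 : Summable (fun n : ℕ => q ^ (n+1)) := by
    simpa [pow_succ] using hgeo.mul_right q
  rw [tsum_of_nat_of_neg_add_one (by simpa [hnat] using hgeo) (h2.congr (fun n => by rw [hneg n]))]
  have e1 : ∑' n : ℕ, q ^ ((n:ℤ)).natAbs = (1-q)⁻¹ := by
    simp_rw [hnat]; exact tsum_geometric_of_lt_one h0 h1
  have e2 : ∑' n : ℕ, q ^ ((-((n:ℤ)+1))).natAbs = (1-q)⁻¹ * q := by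
    simp_rw [hneg, pow_succ]
    rw [tsum_mul_right, tsum_geometric_of_lt_one h0 h1]
  rw [e1, e2]; ring

lemma tail_le {q : ℝ} (h0 : 0 < q) (hhalf : q ≤ 1/2) :
    ∑' k : ℤ, (if k = 0 then 0 else 4 * q ^ k.natAbs) ≤ 16 * q := by
  have h1 : q < 1 := by linarith
  have hqsum := summable_q_natAbs h0.le h1
  have hsum4 : Summable (fun k : ℤ => 4 * q ^ k.natAbs) := hqsum.mul_left 4
  have hext := Summable.tsum_eq_add_tsum_ite hsum4 0
  have htot : ∑' k : ℤ, 4 * q ^ k.natAbs = 4 * ((1-q)⁻¹ * (1+q)) := by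
    rw [tsum_mul_left, tsum_q_int h0.le h1]
  have h40 : 4 * q ^ ((0:ℤ)).natAbs = 4 := by norm_num
  have heq : ∑' k : ℤ, (if k = 0 then 0 else 4 * q ^ k.natAbs)
      = 4 * ((1-q)⁻¹ * (1+q)) - 4 := by
    rw [htot] at hext
    rw [h40] at hext
    linarith
  rw [heq]
  have hq1 : (0:ℝ) < 1 - q := by linarith
  have h2 : (1-q)⁻¹ ≤ 2 := by
    have h3 : (1:ℝ)/2 ≤ 1 - q := by linarith
    calc (1-q)⁻¹ ≤ ((1:ℝ)/2)⁻¹ := inv_anti₀ (by norm_num) h3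
    _ = 2 := by norm_num
  have e : 4 * ((1-q)⁻¹ * (1+q)) - 4 = 8 * q * (1-q)⁻¹ := by
    field_simp
    ring
  rw [e]
  nlinarith [inv_pos.mpr hq1]

lemma term_bound {r x : ℝ} (hr : 0 < r) (hr1 : r ≤ 1) (hx0 : 0 ≤ x) (hx1 : x ≤ r)
    (k : ℤ) (hk : k ≠ 0) :
    ((Real.cosh (π * (x + 2 * (k : ℝ) * π) / (2 * r))) ^ 2)⁻¹
      ≤ 4 * (Real.exp (-(π * (2 * π - 1) / r))) ^ k.natAbs := by
  have hπ := Real.pi_gt_three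
  have hk1 : (1:ℝ) ≤ |(k:ℝ)| := by
    have : (1:ℤ) ≤ |k| := Int.one_le_abs (by omega)
    calc (1:ℝ) = ((1:ℤ):ℝ) := by norm_num
    _ ≤ ((|k|:ℤ):ℝ) := by exact_mod_cast this
    _ = |(k:ℝ)| := by push_cast; rfl
  have habs2 : |2 * (k:ℝ) * π| = 2 * π * |(k:ℝ)| := by
    rw [abs_mul, abs_mul]
    rw [abs_of_nonneg (by positivity : (0:ℝ) ≤ (2:ℝ)), abs_of_pos Real.pi_pos]
    ring
  have htri : |2 * (k:ℝ) * π| - |x| ≤ |x + 2 * (k:ℝ) * π| := by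
    have h2 := abs_sub_abs_le_abs_sub (2 * (k:ℝ) * π) (-x)
    rw [sub_neg_eq_add, abs_neg] at h2
    rw [add_comm x]
    linarith
  have hxabs : |x| ≤ 1 := by rw [abs_of_nonneg hx0]; linarith
  have hlow : (2 * π - 1) * |(k:ℝ)| ≤ |x + 2 * (k:ℝ) * π| := by
    rw [habs2] at htri
    nlinarith
  have hcalc := sech_sq_le_exp (π * (x + 2 * (k:ℝ) * π) / (2 * r))
  refine hcalc.trans ?_
  have hqpow : (Real.exp (-(π * (2 * π - 1) / r))) ^ k.natAbs
      = Real.exp ((k.natAbs : ℝ) * (-(π * (2 * π - 1) / r))) := by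
    rw [Real.exp_nat_mul]
  rw [hqpow]
  have hnat : (k.natAbs : ℝ) = |(k:ℝ)| := by
    rw [Nat.cast_natAbs]; push_cast; ring
  apply mul_le_mul_of_nonneg_left _ (by norm_num : (0:ℝ) ≤ 4)
  apply Real.exp_le_exp.mpr
  rw [hnat]
  have habsdiv : |π * (x + 2 * (k:ℝ) * π) / (2 * r)|
      = π * |x + 2 * (k:ℝ) * π| / (2 * r) := by
    rw [abs_div, abs_mul, abs_of_pos Real.pi_pos,
      abs_of_pos (by positivity : (0:ℝ) < 2 * r)]
  rw [habsdiv, mul_neg, neg_le_neg_iff]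
  have e1 : 2 * (π * |x + 2 * (k:ℝ) * π| / (2 * r)) = π * |x + 2 * (k:ℝ) * π| / r := by
    field_simp
  rw [e1, ← mul_div_assoc, div_le_div_iff₀ hr hr]
  nlinarith [mul_le_mul_of_nonneg_left hlow (mul_pos Real.pi_pos hr).le,
    abs_nonneg (k:ℝ), Real.pi_pos]

end StmtAux

/-- There exist `ρ ∈ (0, 1/2)` and `r₀ > 0` such that for all `0 < r ≤ r₀`,
`ρπ/r ≤ ∫_0^r J(r,x) dx ≤ (1-ρ)π/r`. -/
theorem stmt2 : ∃ ρ : ℝ, 0 < ρ ∧ ρ < 1 / 2 ∧ ∃ r₀ : ℝ, 0 < r₀ ∧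
    ∀ r : ℝ, 0 < r → r ≤ r₀ →
      ρ * π / r ≤ (∫ x in (0:ℝ)..r, Jfun r x) ∧
      (∫ x in (0:ℝ)..r, Jfun r x) ≤ (1 - ρ) * π / r := by
  refine ⟨1/100, by norm_num, by norm_num, 1, one_pos, ?_⟩
  intro r hr hr1
  have hπ := Real.pi_pos
  set q : ℝ := Real.exp (-(π * (2 * π - 1) / r)) with hqdef
  have hq0 : 0 < q := Real.exp_pos _
  have hq15 : q ≤ Real.exp (-15) := by
    apply Real.exp_le_exp.mpr
    have h3 := Real.pi_gt_three
    rw [neg_le_neg_iff, le_div_iff₀ hr]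
    nlinarith
  have hq1600 : q ≤ 1/1600 := by
    refine hq15.trans ?_
    rw [Real.exp_neg]
    calc (Real.exp 15)⁻¹ ≤ (1600:ℝ)⁻¹ := inv_anti₀ (by norm_num) StmtAux.exp15_ge
    _ = 1/1600 := by norm_num
  have hq1 : q < 1 := lt_of_le_of_lt hq1600 (by norm_num)
  have hqhalf : q ≤ 1/2 := hq1600.trans (by norm_num)
  set f : ℤ → ℝ → ℝ :=
    fun k x => ((Real.cosh (π * (x + 2 * (k : ℝ) * π) / (2 * r))) ^ 2)⁻¹ with hfdef
  have hfnonneg : ∀ (k : ℤ) (x : ℝ), 0 ≤ f k x := fun k x => by positivity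
  have hfcont : ∀ k : ℤ, Continuous (f k) := by
    intro k
    apply Continuous.inv₀
    · fun_prop
    · intro x; exact (pow_pos (Real.cosh_pos _) 2).ne'
  set u : ℤ → ℝ := fun k => 4 * q ^ k.natAbs + (if k = 0 then 1 else 0) with hudef
  have hqsum : Summable (fun k : ℤ => q ^ k.natAbs) := StmtAux.summable_q_natAbs hq0.le hq1
  have husum : Summable u := by
    apply Summable.add (hqsum.mul_left 4)
    apply summable_of_ne_finset_zero (s := {(0:ℤ)})
    intro k hk
    simp only [Finset.mem_singleton] at hk
    simp [hk]
  have hbound : ∀ (k : ℤ) (x : ℝ), x ∈ Set.Icc (0:ℝ) r → ‖f k x‖ ≤ u k := by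
    intro k x hx
    rw [Real.norm_eq_abs, abs_of_nonneg (hfnonneg k x)]
    rcases eq_or_ne k 0 with hk | hk
    · subst hk
      have h1 := StmtAux.sech_sq_le_one (π * (x + 2 * ((0:ℤ):ℝ) * π) / (2 * r))
      have h2 : (0:ℝ) ≤ 4 * q ^ ((0:ℤ)).natAbs := by positivity
      simp only [hudef, if_pos rfl]
      calc f 0 x ≤ 1 := h1
      _ ≤ 4 * q ^ ((0:ℤ)).natAbs + 1 := by linarith
    · have h1 := StmtAux.term_bound hr hr1 hx.1 hx.2 k hk
      simp only [hudef, if_neg hk, add_zero]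
      exact h1
  have hsum : ∀ x ∈ Set.Icc (0:ℝ) r, Summable (fun k => f k x) := by
    intro x hx
    apply Summable.of_nonneg_of_le (fun k => hfnonneg k x) (fun k => ?_) husum
    have h1 := hbound k x hx
    rwa [Real.norm_eq_abs, abs_of_nonneg (hfnonneg k x)] at h1
  have hScont : ContinuousOn (fun x => ∑' k, f k x) (Set.Icc (0:ℝ) r) :=
    continuousOn_tsum (fun k => (hfcont k).continuousOn) husum hbound
  have hSint : IntervalIntegrable (fun x => ∑' k, f k x) MeasureTheory.volume 0 r := by
    apply ContinuousOn.intervalIntegrable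
    rwa [Set.uIcc_of_le hr.le]
  set c : ℝ := π ^ 2 / (2 * r ^ 2) with hcdef
  have hcpos : 0 < c := by positivity
  have hJeq : Jfun r = fun x => c * ∑' k, f k x := rfl
  have hJint : IntervalIntegrable (Jfun r) MeasureTheory.volume 0 r := by
    rw [hJeq]; exact hSint.const_mul c
  -- the k = 0 term
  have harg : ∀ x : ℝ, π * (x + 2 * ((0:ℤ):ℝ) * π) / (2 * r) = π / (2 * r) * x := by
    intro x; push_cast; ring
  have hf0 : ∀ x : ℝ, f 0 x = ((Real.cosh (π / (2 * r) * x)) ^ 2)⁻¹ := by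
    intro x
    simp only [hfdef]
    rw [harg x]
  have hintf0 : ∫ x in (0:ℝ)..r, f 0 x
      = Real.sinh (π/2) / Real.cosh (π/2) / (π / (2 * r)) := by
    simp_rw [hf0]
    rw [StmtAux.integral_sech_sq (by positivity)]
    have h1 : π / (2 * r) * r = π / 2 := by field_simp
    rw [h1]
  obtain ⟨hT1, hT2⟩ := StmtAux.T_bounds
  have hTpos : (0:ℝ) < Real.sinh (π/2) / Real.cosh (π/2) := by linarith
  constructor
  · -- lower bound
    have hlow_pt : ∀ x ∈ Set.Icc (0:ℝ) r, c * f 0 x ≤ Jfun r x := by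
      intro x hx
      rw [hJeq]
      exact mul_le_mul_of_nonneg_left
        (Summable.le_tsum (hsum x hx) 0 (fun j _ => hfnonneg j x)) hcpos.le
    have hg_int : IntervalIntegrable (fun x => c * f 0 x) MeasureTheory.volume 0 r :=
      (continuous_const.mul (hfcont 0)).intervalIntegrable 0 r
    have hmono1 := intervalIntegral.integral_mono_on hr.le hg_int hJint hlow_pt
    rw [intervalIntegral.integral_const_mul, hintf0] at hmono1
    refine le_trans ?_ hmono1
    have hc2 : c * (Real.sinh (π/2) / Real.cosh (π/2) / (π / (2 * r)))
        = π / r * (Real.sinh (π/2) / Real.cosh (π/2)) := by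
      rw [hcdef]; field_simp
    rw [hc2]
    have h1 : (1:ℝ)/100 * π / r = π / r * (1/100) := by ring
    rw [h1]
    exact mul_le_mul_of_nonneg_left hT1 (by positivity)
  · -- upper bound
    have hup_pt : ∀ x ∈ Set.Icc (0:ℝ) r, Jfun r x ≤ c * (f 0 x + 1/100) := by
      intro x hx
      rw [hJeq]
      apply mul_le_mul_of_nonneg_left _ hcpos.le
      rw [Summable.tsum_eq_add_tsum_ite (hsum x hx) 0]
      apply add_le_add_right
      have hsum_itef : Summable (fun k : ℤ => if k = 0 then 0 else f k x) := by
        apply Summable.of_nonneg_of_le (fun k => ?_) (fun k => ?_) (hsum x hx)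
        · split_ifs
          · exact le_refl 0
          · exact hfnonneg k x
        · split_ifs with h
          · exact hfnonneg k x
          · exact le_refl _
      have hsum_iteq : Summable (fun k : ℤ => if k = 0 then 0 else 4 * q ^ k.natAbs) := by
        apply Summable.of_nonneg_of_le (fun k => ?_) (fun k => ?_) (hqsum.mul_left 4)
        · split_ifs
          · exact le_refl 0
          · positivity
        · split_ifs with h
          · positivity
          · exact le_refl _
      have h1 : ∑' k : ℤ, (if k = 0 then 0 else f k x)
          ≤ ∑' k : ℤ, (if k = 0 then 0 else 4 * q ^ k.natAbs) := by
        apply Summable.tsum_le_tsum _ hsum_itef hsum_iteq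
        intro k
        split_ifs with h
        · exact le_refl 0
        · exact StmtAux.term_bound hr hr1 hx.1 hx.2 k h
      refine h1.trans ((StmtAux.tail_le hq0 hqhalf).trans ?_)
      linarith [hq1600]
    have hup_int : IntervalIntegrable (fun x => c * (f 0 x + 1/100))
        MeasureTheory.volume 0 r :=
      (continuous_const.mul ((hfcont 0).add continuous_const)).intervalIntegrable 0 r
    have hmono2 := intervalIntegral.integral_mono_on hr.le hJint hup_int hup_pt
    refine hmono2.trans ?_
    rw [intervalIntegral.integral_const_mul,
      intervalIntegral.integral_add ((hfcont 0).intervalIntegrable 0 r)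
        (intervalIntegrable_const), hintf0, intervalIntegral.integral_const]
    have hc3 : c * (Real.sinh (π/2) / Real.cosh (π/2) / (π / (2 * r)) + (r - 0) • ((1:ℝ)/100))
        = π / r * (Real.sinh (π/2) / Real.cosh (π/2) + π / 200) := by
      rw [hcdef]
      rw [smul_eq_mul]
      field_simp
      ring
    rw [hc3]
    have h1 : (1 - 1/100) * π / r = π / r * (99/100) := by ring
    rw [h1]
    apply mul_le_mul_of_nonneg_left _ (by positivity)
    nlinarith [Real.pi_le_four]
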